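/- Let G be a group, 𝔤 = (g_1,…,g_n) a finite string of elements of G, ℰ = {E_1,…,E_m} a finite partition of G, and set g_0 = e. Then for every i ∈ {1,…,m} and every k ∈ {0,1,…,n}, the union ⋃_{C ∈ Con(𝔤,ℰ) : x_k(C) ⊆ E_i} x_0(C) equals g_k^{-1}E_i and is a disjoint union. Consequently, for all j, k ∈ {0,1,…,n}, (g_j^{-1}g_k)·(⋃_{C : x_k(C) ⊆ E_i} x_0(C)) = ⋃_{C : x_j(C) ⊆ E_i} x_0(C). -/
import Mathlib


open Pointwise

namespace PaperStmt

/-- `E : Fin m → Set G` is a partition of `G`: pairwise disjoint with union all of `G`. -/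
def IsPartition {G : Type*} {m : ℕ} (E : Fin m → Set G) : Prop :=
  (∀ i j, i ≠ j → Disjoint (E i) (E j)) ∧ (⋃ i, E i) = Set.univ

/-- `C = (c_0, …, c_n)` is a configuration for the pair `(g, E)`: there is `x ∈ E (c 0)`
with `g i * x ∈ E (c i)` for `1 ≤ i ≤ n`. -/
def IsConfig {G : Type*} [Group G] {n m : ℕ} (g : Fin n → G) (E : Fin m → Set G)
    (C : Fin (n + 1) → Fin m) : Prop :=
  ∃ x : G, x ∈ E (C 0) ∧ ∀ i : Fin n, g i * x ∈ E (C i.succ)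

/-- `x_0(C) = E_{c_0} ∩ ⋂_{j=1}^n g_j⁻¹ E_{c_j}`. -/
def xzero {G : Type*} [Group G] {n m : ℕ} (g : Fin n → G) (E : Fin m → Set G)
    (C : Fin (n + 1) → Fin m) : Set G :=
  E (C 0) ∩ ⋂ i : Fin n, (g i)⁻¹ • E (C i.succ)

/-- The string `(g_0, g_1, …, g_n)` with `g_0 = e`. -/
def ghat {G : Type*} [Group G] {n : ℕ} (g : Fin n → G) : Fin (n + 1) → G := Fin.cons 1 g

/-- `x_j(C) = g_j • x_0(C)` for `0 ≤ j ≤ n` (with `g_0 = e`). -/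
def xj {G : Type*} [Group G] {n m : ℕ} (g : Fin n → G) (E : Fin m → Set G)
    (C : Fin (n + 1) → Fin m) (j : Fin (n + 1)) : Set G :=
  ghat g j • xzero g E C

/-- The real-valued indicator of a proposition. -/
noncomputable def ind (P : Prop) : ℝ :=
  letI := Classical.propDecidable P; if P then 1 else 0

/-- `f` is a solution of the system of configuration equations `Eq(g, E)`:
for all `1 ≤ i ≤ m` and `0 ≤ j, k ≤ n`,
`∑_{C : x_j(C) ⊆ E_i} f C = ∑_{C : x_k(C) ⊆ E_i} f C`. -/
def IsEqSolution {G : Type*} [Group G] {n m : ℕ} (g : Fin n → G) (E : Fin m → Set G)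
    (f : {C : Fin (n + 1) → Fin m // IsConfig g E C} → ℝ) : Prop :=
  ∀ (i : Fin m) (j k : Fin (n + 1)),
    ∑ᶠ C ∈ {C : {C : Fin (n + 1) → Fin m // IsConfig g E C} | xj g E C.1 j ⊆ E i}, f C =
    ∑ᶠ C ∈ {C : {C : Fin (n + 1) → Fin m // IsConfig g E C} | xj g E C.1 k ⊆ E i}, f C

end PaperStmt

namespace PaperStmt

/-- For every `i ∈ {1, …, m}` and `k ∈ {0, 1, …, n}`, the union
`⋃_{C : x_k(C) ⊆ E_i} x_0(C)` equals `g_k⁻¹ • E_i` and is a disjoint union; consequently,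
for all `j, k`, `(g_j⁻¹ g_k) • (⋃_{C : x_k(C) ⊆ E_i} x_0(C)) = ⋃_{C : x_j(C) ⊆ E_i} x_0(C)`. -/

lemma mem_xzero_iff {G : Type*} [Group G] {n m : ℕ} (g : Fin n → G) (E : Fin m → Set G)
    (C : Fin (n + 1) → Fin m) (x : G) :
    x ∈ xzero g E C ↔ x ∈ E (C 0) ∧ ∀ t : Fin n, g t * x ∈ E (C t.succ) := by
  simp [xzero, Set.mem_iInter, Set.mem_inv_smul_set_iff, smul_eq_mul]

lemma smul_mem_of_mem_xzero {G : Type*} [Group G] {n m : ℕ} (g : Fin n → G) (E : Fin m → Set G)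
    (C : Fin (n + 1) → Fin m) {x : G} (hx : x ∈ xzero g E C) (k : Fin (n + 1)) :
    ghat g k * x ∈ E (C k) := by
  rw [mem_xzero_iff] at hx
  induction k using Fin.cases with
  | zero => simpa [ghat] using hx.1
  | succ t => simpa [ghat] using hx.2 t

lemma xj_subset_iff {G : Type*} [Group G] {n m : ℕ} {g : Fin n → G} {E : Fin m → Set G}
    (hE : IsPartition E) {C : Fin (n + 1) → Fin m} (hC : IsConfig g E C)
    (i : Fin m) (k : Fin (n + 1)) :
    xj g E C k ⊆ E i ↔ C k = i := by
  obtain ⟨x, hx0, hxs⟩ := hC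
  have hx : x ∈ xzero g E C := (mem_xzero_iff g E C x).2 ⟨hx0, hxs⟩
  constructor
  · intro hsub
    have h1 : ghat g k * x ∈ E (C k) := smul_mem_of_mem_xzero g E C hx k
    have h2 : ghat g k * x ∈ E i := hsub ⟨x, hx, rfl⟩
    by_contra hne
    exact (hE.1 _ _ hne).ne_of_mem h1 h2 rfl
  · rintro rfl
    rintro y ⟨z, hz, rfl⟩
    exact smul_mem_of_mem_xzero g E C hz k

lemma union_xzero_key {G : Type*} [Group G] {n m : ℕ} (g : Fin n → G) (E : Fin m → Set G)
    (hE : IsPartition E) (i : Fin m) (k : Fin (n + 1)) :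
    (⋃ C ∈ {C : Fin (n + 1) → Fin m | IsConfig g E C ∧ xj g E C k ⊆ E i}, xzero g E C) =
      (ghat g k)⁻¹ • E i := by
  ext y
  simp only [Set.mem_iUnion, Set.mem_setOf_eq, Set.mem_inv_smul_set_iff, smul_eq_mul]
  constructor
  · rintro ⟨C, ⟨hC, hsub⟩, hy⟩
    have := smul_mem_of_mem_xzero g E C hy k
    rwa [(xj_subset_iff hE hC i k).1 hsub] at this
  · intro hy
    have hcov : ∀ j : Fin (n + 1), ∃ c, ghat g j * y ∈ E c := by
      intro j
      have : ghat g j * y ∈ ⋃ c, E c := hE.2 ▸ Set.mem_univ _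
      simpa using this
    choose C hC using hcov
    have hy0 : y ∈ E (C 0) := by simpa [ghat] using hC 0
    have hys : ∀ t : Fin n, g t * y ∈ E (C t.succ) := fun t => by simpa [ghat] using hC t.succ
    have hmem : y ∈ xzero g E C := (mem_xzero_iff g E C y).2 ⟨hy0, hys⟩
    have hconf : IsConfig g E C := ⟨y, hy0, hys⟩
    have hCk : C k = i := by
      by_contra hne
      exact (hE.1 _ _ hne).ne_of_mem (hC k) hy rfl
    exact ⟨C, ⟨hconf, (xj_subset_iff hE hconf i k).2 hCk⟩, hmem⟩

theorem union_xzero_eq {G : Type*} [Group G] {n m : ℕ} (g : Fin n → G) (E : Fin m → Set G)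
    (hE : IsPartition E) :
    ∀ (i : Fin m) (k : Fin (n + 1)),
      (⋃ C ∈ {C : Fin (n + 1) → Fin m | IsConfig g E C ∧ xj g E C k ⊆ E i}, xzero g E C) =
        (ghat g k)⁻¹ • E i ∧
      (∀ C C' : Fin (n + 1) → Fin m,
        (IsConfig g E C ∧ xj g E C k ⊆ E i) → (IsConfig g E C' ∧ xj g E C' k ⊆ E i) →
        C ≠ C' → Disjoint (xzero g E C) (xzero g E C')) ∧
      (∀ j : Fin (n + 1),
        ((ghat g j)⁻¹ * ghat g k) •
            (⋃ C ∈ {C : Fin (n + 1) → Fin m | IsConfig g E C ∧ xj g E C k ⊆ E i},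
              xzero g E C) =
          ⋃ C ∈ {C : Fin (n + 1) → Fin m | IsConfig g E C ∧ xj g E C j ⊆ E i},
            xzero g E C) := by
  intro i k
  refine ⟨union_xzero_key g E hE i k, ?_, ?_⟩
  · rintro C C' ⟨hC, _⟩ ⟨hC', _⟩ hne
    obtain ⟨j, hj⟩ := Function.ne_iff.1 hne
    rw [Set.disjoint_left]
    intro x hx hx'
    exact (hE.1 _ _ hj).ne_of_mem (smul_mem_of_mem_xzero g E C hx j)
      (smul_mem_of_mem_xzero g E C' hx' j) rfl
  · intro j
    rw [union_xzero_key g E hE i k, union_xzero_key g E hE i j, smul_smul,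
      mul_inv_cancel_right]


end PaperStmt
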